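/- Let t be a positive integer. The set of vertices of the Hadamard graph G_t, i.e., the set of ±1-vectors of length 4t orthogonal to each of r1, r2 and r3, has cardinality ∑_{k=0}^{t} (binom(t,k))^4. -/

import Mathlib

open Finset

/-- A ±1-vector of length `4t`. -/
def IsPMVector (t : ℕ) (v : Fin (4 * t) → ℤ) : Prop :=
  ∀ i, v i = 1 ∨ v i = -1

/-- Orthogonality of vectors of length `4t`. -/
def Orth (t : ℕ) (v w : Fin (4 * t) → ℤ) : Prop :=
  ∑ i, v i * w i = 0

/-- First normalized row: all ones. -/
def r1 (t : ℕ) : Fin (4 * t) → ℤ := fun _ => 1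

/-- Second normalized row: `1` on Q1 ∪ Q2, `-1` on Q3 ∪ Q4. -/
def r2 (t : ℕ) : Fin (4 * t) → ℤ := fun i => if (i : ℕ) < 2 * t then 1 else -1

/-- Third normalized row: `1` on Q1 ∪ Q3, `-1` on Q2 ∪ Q4. -/
def r3 (t : ℕ) : Fin (4 * t) → ℤ :=
  fun i => if (i : ℕ) < t ∨ (2 * t ≤ (i : ℕ) ∧ (i : ℕ) < 3 * t) then 1 else -1

/-- A vertex of the Hadamard graph `G_t`: a ±1-vector of length `4t`
orthogonal to each of the three normalized rows. -/
def IsVertex (t : ℕ) (v : Fin (4 * t) → ℤ) : Prop :=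
  IsPMVector t v ∧ Orth t v (r1 t) ∧ Orth t v (r2 t) ∧ Orth t v (r3 t)

/-- Number of entries of `v` equal to `-1` in quarter `Qⱼ₊₁ = [j*t, (j+1)*t)`, `j = 0,1,2,3`. -/
def negCount (t : ℕ) (v : Fin (4 * t) → ℤ) (j : ℕ) : ℕ :=
  (univ.filter fun i : Fin (4 * t) =>
    j * t ≤ (i : ℕ) ∧ (i : ℕ) < (j + 1) * t ∧ v i = -1).card

/-- A `k`-vertex of `G_t`: a vertex with exactly `k` entries equal to `-1` in the
first quarter. -/
def IsKVertex (t k : ℕ) (v : Fin (4 * t) → ℤ) : Prop :=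
  IsVertex t v ∧ negCount t v 0 = k

section Aux
variable {t : ℕ}

abbrev Quad (t : ℕ) := Finset (Fin t) × Finset (Fin t) × Finset (Fin t) × Finset (Fin t)

def emb (q : Fin 4) (r : Fin t) : Fin (4 * t) :=
  ⟨q.val * t + r.val, by
    calc q.val * t + r.val < (q.val + 1) * t := by
          have := r.isLt; rw [add_mul, one_mul]; omega
      _ ≤ 4 * t := Nat.mul_le_mul_right t (by omega)⟩

lemma emb_div (ht : 0 < t) (q : Fin 4) (r : Fin t) : ((emb q r : Fin (4*t)) : ℕ) / t = q.val := by
  show (q.val * t + r.val) / t = q.val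
  rw [mul_comm, Nat.mul_add_div ht, Nat.div_eq_of_lt r.isLt, add_zero]

lemma emb_mod (q : Fin 4) (r : Fin t) : ((emb q r : Fin (4*t)) : ℕ) % t = r.val := by
  show (q.val * t + r.val) % t = r.val
  rw [mul_comm, Nat.mul_add_mod, Nat.mod_eq_of_lt r.isLt]

lemma emb_bij (ht : 0 < t) :
    Function.Bijective (fun p : Fin 4 × Fin t => (emb p.1 p.2 : Fin (4*t))) := by
  rw [Fintype.bijective_iff_injective_and_card]
  refine ⟨?_, by simp⟩
  intro ⟨q, r⟩ ⟨q', r'⟩ h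
  simp only at h
  have h1 : ((emb q r : Fin (4*t)) : ℕ) / t = ((emb q' r' : Fin (4*t)) : ℕ) / t := by rw [h]
  have h2 : ((emb q r : Fin (4*t)) : ℕ) % t = ((emb q' r' : Fin (4*t)) : ℕ) % t := by rw [h]
  rw [emb_div ht, emb_div ht] at h1
  rw [emb_mod, emb_mod] at h2
  exact Prod.ext (Fin.ext h1) (Fin.ext h2)

lemma sum_quarters (ht : 0 < t) (f : Fin (4*t) → ℤ) :
    ∑ i, f i = ∑ q : Fin 4, ∑ r : Fin t, f (emb q r) := by
  have := Fintype.sum_bijective _ (emb_bij ht) (fun p : Fin 4 × Fin t => f (emb p.1 p.2)) f (fun p => rfl)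
  rw [← this, Fintype.sum_prod_type]

def sel (p : Quad t) : ℕ → Finset (Fin t) :=
  fun q => if q = 0 then p.1 else if q = 1 then p.2.1 else if q = 2 then p.2.2.1 else p.2.2.2

def phi (ht : 0 < t) (p : Quad t) : Fin (4 * t) → ℤ :=
  fun i => if (⟨(i : ℕ) % t, Nat.mod_lt _ ht⟩ : Fin t) ∈ sel p ((i : ℕ) / t) then -1 else 1

lemma phi_emb (ht : 0 < t) (p : Quad t) (q : Fin 4) (r : Fin t) :
    phi ht p (emb q r) = if r ∈ sel p q.val then -1 else 1 := by
  unfold phi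
  rw [show (⟨((emb q r : Fin (4*t)) : ℕ) % t, Nat.mod_lt _ ht⟩ : Fin t) = r from
      Fin.ext (emb_mod q r), emb_div ht]

lemma sum_pm (A : Finset (Fin t)) :
    ∑ r : Fin t, (if r ∈ A then (-1:ℤ) else 1) = t - 2 * A.card := by
  have h : ∀ r : Fin t, (if r ∈ A then (-1:ℤ) else 1) = 1 - 2 * (if r ∈ A then 1 else 0) :=
    fun r => by split <;> ring
  rw [Finset.sum_congr rfl fun r _ => h r, Finset.sum_sub_distrib, ← Finset.mul_sum,
    Finset.sum_boole]
  simp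

end Aux

section Aux2
variable {t : ℕ}

lemma r2_emb (q : Fin 4) (r : Fin t) :
    r2 t (emb q r) = if q.val < 2 then 1 else -1 := by
  have hr := r.isLt
  rcases q with ⟨qv, hq⟩
  interval_cases qv <;> simp [r2, emb] <;> omega

lemma r3_emb (q : Fin 4) (r : Fin t) :
    r3 t (emb q r) = if q.val = 0 ∨ q.val = 2 then 1 else -1 := by
  have hr := r.isLt
  rcases q with ⟨qv, hq⟩
  interval_cases qv <;> simp [r3, emb] <;> omega

lemma main_sum (ht : 0 < t) (p : Quad t) (w : Fin (4*t) → ℤ) (c : Fin 4 → ℤ)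
    (hc : ∀ q r, w (emb q r) = c q) :
    ∑ i, phi ht p i * w i = ∑ q : Fin 4, c q * ((t : ℤ) - 2 * (sel p q.val).card) := by
  rw [sum_quarters ht]
  exact Finset.sum_congr rfl fun q _ => by
    simp only [phi_emb ht, hc]
    rw [← Finset.sum_mul, sum_pm, mul_comm]

lemma isVertex_phi_iff (ht : 0 < t) (p : Quad t) :
    IsVertex t (phi ht p) ↔
      (p.2.1.card = t - p.1.card ∧ p.2.2.1.card = t - p.1.card ∧ p.2.2.2.card = p.1.card) := by
  have hpm : IsPMVector t (phi ht p) := fun i => by unfold phi; split <;> simp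
  have e1 := main_sum ht p (r1 t) (fun _ => 1) (fun q r => rfl)
  have e2 := main_sum ht p (r2 t) (fun q => if q.val < 2 then 1 else -1) (fun q r => r2_emb q r)
  have e3 := main_sum ht p (r3 t) (fun q => if q.val = 0 ∨ q.val = 2 then 1 else -1)
    (fun q r => r3_emb q r)
  rw [Fin.sum_univ_four] at e1 e2 e3
  simp only [sel, Fin.val_zero, Fin.val_one, Fin.val_two,
    show ((3:Fin 4):ℕ) = 3 from rfl] at e1 e2 e3
  norm_num at e1 e2 e3
  unfold IsVertex Orth
  rw [e1, e2, e3]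
  have b1 : p.1.card ≤ t := by simpa using Finset.card_le_univ p.1
  have b2 : p.2.1.card ≤ t := by simpa using Finset.card_le_univ p.2.1
  have b3 : p.2.2.1.card ≤ t := by simpa using Finset.card_le_univ p.2.2.1
  have b4 : p.2.2.2.card ≤ t := by simpa using Finset.card_le_univ p.2.2.2
  simp only [hpm, true_and]
  constructor
  · rintro ⟨h1, h2, h3⟩; omega
  · rintro ⟨h1, h2, h3⟩; refine ⟨by omega, by omega, by omega⟩

end Aux2

section Aux3
variable {t : ℕ}

lemma phi_inj (ht : 0 < t) : Function.Injective (phi ht (t := t)) := by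
  intro p p' h
  have key : ∀ q : Fin 4, sel p q.val = sel p' q.val := by
    intro q
    ext r
    have := congrFun h (emb q r)
    rw [phi_emb ht, phi_emb ht] at this
    by_cases hr : r ∈ sel p q.val <;> by_cases hr' : r ∈ sel p' q.val <;>
      simp [hr, hr'] at this ⊢
  have k0 := key 0; have k1 := key 1; have k2 := key 2; have k3 := key 3
  simp only [sel, Fin.val_zero, Fin.val_one, Fin.val_two,
    show ((3:Fin 4):ℕ) = 3 from rfl] at k0 k1 k2 k3
  norm_num at k0 k1 k2 k3
  exact Prod.ext k0 (Prod.ext k1 (Prod.ext k2 k3))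

lemma phi_surj (ht : 0 < t) (v : Fin (4*t) → ℤ) (hv : IsPMVector t v) :
    ∃ p : Quad t, phi ht p = v := by
  set A : Fin 4 → Finset (Fin t) := fun q => univ.filter (fun r => v (emb q r) = -1) with hA
  refine ⟨(A 0, A 1, A 2, A 3), funext fun i => ?_⟩
  have hqlt : (i : ℕ) / t < 4 := by
    have := i.isLt
    exact Nat.div_lt_of_lt_mul (by omega)
  have hemb : emb ⟨(i : ℕ) / t, hqlt⟩ ⟨(i : ℕ) % t, Nat.mod_lt _ ht⟩ = i := by
    apply Fin.ext
    show (i : ℕ) / t * t + (i : ℕ) % t = i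
    rw [mul_comm]
    exact Nat.div_add_mod _ _
  have hsel : sel (A 0, A 1, A 2, A 3) ((i : ℕ) / t) = A ⟨(i : ℕ) / t, hqlt⟩ := by
    unfold sel
    interval_cases h : (i : ℕ) / t <;> rfl
  unfold phi
  rw [hsel]
  simp only [hA, Finset.mem_filter, Finset.mem_univ, true_and, hemb]
  rcases hv i with h | h <;> simp [h]

end Aux3

def VS (t : ℕ) : Finset (Quad t) :=
  univ.filter fun p =>
    p.2.1.card = t - p.1.card ∧ p.2.2.1.card = t - p.1.card ∧ p.2.2.2.card = p.1.card

lemma card_VS (t : ℕ) : (VS t).card = ∑ k ∈ Finset.range (t + 1), (Nat.choose t k) ^ 4 := by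
  have hVS : VS t = (Finset.range (t+1)).biUnion (fun k =>
      Finset.powersetCard k univ ×ˢ Finset.powersetCard (t-k) univ ×ˢ
      Finset.powersetCard (t-k) univ ×ˢ Finset.powersetCard k univ) := by
    ext p
    simp only [VS, Finset.mem_filter, Finset.mem_univ, true_and, Finset.mem_biUnion,
      Finset.mem_range, Finset.mem_product, Finset.mem_powersetCard_univ]
    constructor
    · rintro ⟨h1, h2, h3⟩
      have hb : p.1.card ≤ t := by simpa using Finset.card_le_univ p.1
      exact ⟨p.1.card, by omega, rfl, h1, h2, h3⟩
    · rintro ⟨k, hk, e1, e2, e3, e4⟩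
      exact ⟨by omega, by omega, by omega⟩
  rw [hVS, Finset.card_biUnion]
  · refine Finset.sum_congr rfl fun k hk => ?_
    have hk' : k ≤ t := by simpa using Nat.lt_succ_iff.mp (Finset.mem_range.mp hk)
    simp only [Finset.card_product, Finset.card_powersetCard, Finset.card_univ,
      Fintype.card_fin]
    rw [Nat.choose_symm hk']
    ring
  · intro x hx y hy hxy
    show Disjoint _ _; rw [Finset.disjoint_left]
    rintro p hp hp'
    simp only [Finset.mem_product, Finset.mem_powersetCard_univ] at hp hp'
    omega


/-- the number of vertices of `G_t` is `∑_{k=0}^{t} C(t,k)^4`. -/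
theorem stmt_1 (t : ℕ) (ht : 0 < t) :
    {v : Fin (4 * t) → ℤ | IsVertex t v}.ncard =
      ∑ k ∈ Finset.range (t + 1), (Nat.choose t k) ^ 4 := by
  have hset : {v : Fin (4 * t) → ℤ | IsVertex t v} = phi ht '' ↑(VS t) := by
    ext v
    simp only [Set.mem_setOf_eq, Set.mem_image, Finset.coe_filter, Finset.mem_coe, VS,
      Finset.mem_filter, Finset.mem_univ, true_and]
    constructor
    · intro hv
      obtain ⟨p, rfl⟩ := phi_surj ht v hv.1
      exact ⟨p, (isVertex_phi_iff ht p).1 hv, rfl⟩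
    · rintro ⟨p, hp, rfl⟩
      exact (isVertex_phi_iff ht p).2 hp
  rw [hset, Set.ncard_image_of_injective _ (phi_inj ht), Set.ncard_coe_finset, card_VS]
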